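/- Let K be a compact, perfectly normal topological space and X a real Banach space. A function f ∈ C(K,X) with ‖f‖ = 1 is a (ρ₋)-left symmetric point of C(K,X) if and only if both of the following hold: (i) there exists k₀ ∈ K such that ‖f(k₀)‖ = 1 and f(k) = 0 for all k ∈ K with k ≠ k₀, and (ii) f(k₀) is a (ρ₋)-left symmetric point of X. -/

import Mathlib

open Filter Topology Set Metric NormedSpace

noncomputable section

/-- Birkhoff–James orthogonality: `x ⊥_B y` iff `‖x + t • y‖ ≥ ‖x‖` for all real `t`. -/
def BJOrth {E : Type*} [NormedAddCommGroup E] [NormedSpace ℝ E] (x y : E) : Prop :=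
  ∀ t : ℝ, ‖x‖ ≤ ‖x + t • y‖

/-- The norm derivative `ρ'₊(x,y) = ‖x‖ · lim_{t→0⁺} (‖x+ty‖-‖x‖)/t`. -/
def rhoPlus {E : Type*} [NormedAddCommGroup E] [NormedSpace ℝ E] (x y : E) : ℝ :=
  ‖x‖ * limUnder (𝓝[>] (0 : ℝ)) (fun t => (‖x + t • y‖ - ‖x‖) / t)

/-- The norm derivative `ρ'₋(x,y) = ‖x‖ · lim_{t→0⁻} (‖x+ty‖-‖x‖)/t`. -/
def rhoMinus {E : Type*} [NormedAddCommGroup E] [NormedSpace ℝ E] (x y : E) : ℝ :=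
  ‖x‖ * limUnder (𝓝[<] (0 : ℝ)) (fun t => (‖x + t • y‖ - ‖x‖) / t)

/-- The norm derivative `ρ'(x,y) = (ρ'₊(x,y) + ρ'₋(x,y))/2`. -/
def rhoDer {E : Type*} [NormedAddCommGroup E] [NormedSpace ℝ E] (x y : E) : ℝ :=
  (rhoPlus x y + rhoMinus x y) / 2

/-- `x` is an exposed point of the closed unit ball of `E`: there is a norm-one functional `f`
with `f x = 1` and `f u < 1` for every `u` in the ball with `u ≠ x`. -/
def ExposedPt {E : Type*} [NormedAddCommGroup E] [NormedSpace ℝ E] (x : E) : Prop :=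
  ‖x‖ ≤ 1 ∧ ∃ f : E →L[ℝ] ℝ, ‖f‖ = 1 ∧ f x = 1 ∧ ∀ u : E, ‖u‖ ≤ 1 → u ≠ x → f u < 1

namespace Aux15
open scoped Classical

variable {E : Type*} [NormedAddCommGroup E] [NormedSpace ℝ E]

/-- The one-sided difference quotient. -/
def qf (x y : E) (t : ℝ) : ℝ := (‖x + t • y‖ - ‖x‖) / t

lemma convexOn_nrm (x y : E) : ConvexOn ℝ univ (fun t : ℝ => ‖x + t • y‖) := by
  have h := (convexOn_univ_norm (E := E)).comp_affineMap (AffineMap.lineMap x (x + y))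
  have : (fun t : ℝ => ‖x + t • y‖) = (norm ∘ (AffineMap.lineMap x (x+y) : ℝ →ᵃ[ℝ] E)) := by
    funext t
    simp [AffineMap.lineMap_apply, add_sub_cancel_left]
    rw [add_comm]
  rw [this]
  simpa using h

lemma qf_monoOn (x y : E) : MonotoneOn (qf x y) (Iio (0:ℝ)) := by
  intro s hs t ht hst
  have := (convexOn_nrm x y).secant_mono (a := 0) (x := s) (y := t)
    (mem_univ _) (mem_univ _) (mem_univ _) (ne_of_lt hs) (ne_of_lt ht) hst
  simpa [qf] using this

lemma abs_qf_le (x y : E) {t : ℝ} (ht : t ≠ 0) : |qf x y t| ≤ ‖y‖ := by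
  have h1 : |‖x + t • y‖ - ‖x‖| ≤ ‖t • y‖ := by
    simpa using abs_norm_sub_norm_le (x + t • y) x
  rw [norm_smul] at h1
  rw [qf, abs_div]
  rw [div_le_iff₀ (by positivity : (0:ℝ) < |t|)]
  simpa [Real.norm_eq_abs, mul_comm] using h1

lemma qf_bddAbove (x y : E) : BddAbove (qf x y '' Iio (0:ℝ)) := by
  refine ⟨‖y‖, ?_⟩
  rintro _ ⟨t, ht, rfl⟩
  exact (abs_le.mp (abs_qf_le x y (ne_of_lt ht))).2

/-- The left derivative value. -/
def Lm (x y : E) : ℝ := sSup (qf x y '' Iio (0:ℝ))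

lemma tendsto_qf (x y : E) : Tendsto (qf x y) (𝓝[<] (0:ℝ)) (𝓝 (Lm x y)) :=
  (qf_monoOn x y).tendsto_nhdsLT (qf_bddAbove x y)

lemma rhoMinus_eq (x y : E) : rhoMinus x y = ‖x‖ * Lm x y := by
  rw [show rhoMinus x y = ‖x‖ * limUnder (𝓝[<] (0:ℝ)) (qf x y) from rfl,
    (tendsto_qf x y).limUnder_eq]

lemma qf_le_Lm (x y : E) {t : ℝ} (ht : t < 0) : qf x y t ≤ Lm x y :=
  le_csSup (qf_bddAbove x y) (mem_image_of_mem _ ht)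

lemma rhoMinus_congr {x y z w : E} (hn : ‖x‖ = ‖z‖)
    (hev : ∀ᶠ t in 𝓝[<] (0:ℝ), ‖x + t • y‖ = ‖z + t • w‖) :
    rhoMinus x y = rhoMinus z w := by
  have h : (fun t : ℝ => (‖x + t • y‖ - ‖z‖)/t) =ᶠ[𝓝[<] (0:ℝ)]
      (fun t : ℝ => (‖z + t • w‖ - ‖z‖)/t) := by
    filter_upwards [hev] with t ht; rw [ht]
  rw [show rhoMinus x y = ‖x‖ * limUnder (𝓝[<] (0:ℝ)) (fun t : ℝ => (‖x + t • y‖ - ‖x‖)/t) from rfl,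
    show rhoMinus z w = ‖z‖ * limUnder (𝓝[<] (0:ℝ)) (fun t : ℝ => (‖z + t • w‖ - ‖z‖)/t) from rfl,
    hn, limUnder, limUnder, map_congr h]

lemma rhoMinus_eq_zero_of_eventually {x y : E}
    (hev : ∀ᶠ t in 𝓝[<] (0:ℝ), ‖x + t • y‖ = ‖x‖) : rhoMinus x y = 0 := by
  have ht : Tendsto (fun t : ℝ => (‖x + t • y‖ - ‖x‖)/t) (𝓝[<] (0:ℝ)) (𝓝 0) := by
    apply Tendsto.congr' (f₁ := fun _ => (0:ℝ))
    · filter_upwards [hev] with t h; rw [h]; simp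
    · exact tendsto_const_nhds
  rw [show rhoMinus x y = ‖x‖ * limUnder (𝓝[<] (0:ℝ)) (fun t : ℝ => (‖x + t • y‖ - ‖x‖)/t) from rfl,
    ht.limUnder_eq, mul_zero]


lemma rhoMinus_eq_of_eventually {x y : E} {c : ℝ}
    (hev : ∀ᶠ t in 𝓝[<] (0:ℝ), ‖x + t • y‖ = ‖x‖ + t * c) : rhoMinus x y = ‖x‖ * c := by
  have ht : Tendsto (fun t : ℝ => (‖x + t • y‖ - ‖x‖)/t) (𝓝[<] (0:ℝ)) (𝓝 c) := by
    apply Tendsto.congr' (f₁ := fun _ => c)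
    · filter_upwards [hev, self_mem_nhdsWithin] with t h h2
      have ht0 : t ≠ 0 := ne_of_lt (h2 : t < (0:ℝ))
      rw [h, add_sub_cancel_left, mul_div_cancel_left₀ _ ht0]
    · exact tendsto_const_nhds
  rw [show rhoMinus x y = ‖x‖ * limUnder (𝓝[<] (0:ℝ)) (fun t : ℝ => (‖x + t • y‖ - ‖x‖)/t) from rfl,
    ht.limUnder_eq]

variable {F : Type*} [NormedAddCommGroup F] [NormedSpace ℝ F]

lemma rhoMinus_congr₂ {x y : E} {z w : F} (hn : ‖x‖ = ‖z‖)
    (hev : ∀ᶠ t in 𝓝[<] (0:ℝ), ‖x + t • y‖ = ‖z + t • w‖) :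
    rhoMinus x y = rhoMinus z w := by
  have h : (fun t : ℝ => (‖x + t • y‖ - ‖z‖)/t) =ᶠ[𝓝[<] (0:ℝ)]
      (fun t : ℝ => (‖z + t • w‖ - ‖z‖)/t) := by
    filter_upwards [hev] with t ht; rw [ht]
  rw [show rhoMinus x y = ‖x‖ * limUnder (𝓝[<] (0:ℝ)) (fun t : ℝ => (‖x + t • y‖ - ‖x‖)/t) from rfl,
    show rhoMinus z w = ‖z‖ * limUnder (𝓝[<] (0:ℝ)) (fun t : ℝ => (‖z + t • w‖ - ‖z‖)/t) from rfl,
    hn, limUnder, limUnder, map_congr h]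

section CK

variable {K : Type*} [TopologicalSpace K] [CompactSpace K] [T2Space K]
variable {X : Type*} [NormedAddCommGroup X] [NormedSpace ℝ X]

lemma exists_norm_eq [Nonempty K] (f : C(K, X)) : ∃ k, ‖f k‖ = ‖f‖ := by
  obtain ⟨k, -, hk⟩ := isCompact_univ.exists_isMaxOn univ_nonempty
    ((continuous_norm.comp f.continuous).continuousOn)
  refine ⟨k, le_antisymm (f.norm_coe_le_norm k) ?_⟩
  exact (f.norm_le (norm_nonneg _)).2 fun x => hk (mem_univ x)

lemma norm_eq_of {h : C(K, X)} {C : ℝ} (hub : ∀ k, ‖h k‖ ≤ C) {k : K} (hk : ‖h k‖ = C) :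
    ‖h‖ = C :=
  le_antisymm ((h.norm_le (hk ▸ norm_nonneg _)).2 hub) (hk ▸ h.norm_coe_le_norm k)

lemma isolated {f : C(K, X)} {k₀ : K} (h1 : ‖f k₀‖ = 1) (h0 : ∀ k, k ≠ k₀ → f k = 0) :
    IsOpen {k₀} := by
  have he : {k₀} = (fun k => ‖f k‖) ⁻¹' (Ioi (1/2 : ℝ)) := by
    ext k
    simp only [mem_singleton_iff, mem_preimage, mem_Ioi]
    constructor
    · rintro rfl; rw [h1]; norm_num
    · intro hk
      by_contra hne
      rw [h0 k hne, norm_zero] at hk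
      norm_num at hk
  rw [he]
  exact isOpen_Ioi.preimage (continuous_norm.comp f.continuous)

lemma exists_point_mass {k₀ : K} (hopen : IsOpen ({k₀} : Set K)) (y : X) :
    ∃ g : C(K, X), g k₀ = y ∧ ∀ k, k ≠ k₀ → g k = 0 := by
  have hc : Continuous fun k => if k = k₀ then y else 0 := by
    rw [continuous_iff_continuousAt]
    intro k
    rcases eq_or_ne k k₀ with rfl | hk
    · apply Filter.EventuallyEq.continuousAt (y := y)
      filter_upwards [hopen.mem_nhds rfl] with a ha
      simp [mem_singleton_iff.mp ha]
    · apply Filter.EventuallyEq.continuousAt (y := 0)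
      filter_upwards [isOpen_compl_singleton.mem_nhds hk] with a ha
      simp [(mem_compl_singleton_iff.mp ha : a ≠ k₀)]
  exact ⟨⟨_, hc⟩, by simp, fun k hk => by simp [hk]⟩

lemma exists_zero_at {k₀ : K} (hopen : IsOpen ({k₀} : Set K)) (g : C(K, X)) :
    ∃ g' : C(K, X), g' k₀ = 0 ∧ ∀ k, k ≠ k₀ → g' k = g k := by
  have hc : Continuous fun k => if k = k₀ then (0:X) else g k := by
    rw [continuous_iff_continuousAt]
    intro k
    rcases eq_or_ne k k₀ with rfl | hk
    · apply Filter.EventuallyEq.continuousAt (y := 0)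
      filter_upwards [hopen.mem_nhds rfl] with a ha
      simp [mem_singleton_iff.mp ha]
    · have hev : (fun k => if k = k₀ then (0:X) else g k) =ᶠ[𝓝 k] g := by
        filter_upwards [isOpen_compl_singleton.mem_nhds hk] with a ha
        simp [(mem_compl_singleton_iff.mp ha : a ≠ k₀)]
      exact (g.continuous.continuousAt).congr hev.symm
  exact ⟨⟨_, hc⟩, by simp, fun k hk => by simp [hk]⟩

end CK
end Aux15

set_option maxHeartbeats 2000000 in
open Aux15 in
theorem stmt15 {K X : Type*} [TopologicalSpace K] [CompactSpace K] [T2Space K]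
    [PerfectlyNormalSpace K]
    [NormedAddCommGroup X] [NormedSpace ℝ X] [CompleteSpace X]
    (f : C(K, X)) (hf : ‖f‖ = 1) :
    (∀ g : C(K, X), rhoMinus f g = 0 → rhoMinus g f = 0) ↔
      (∃ k₀ : K, ‖f k₀‖ = 1 ∧ (∀ k : K, k ≠ k₀ → f k = 0) ∧
        (∀ y : X, rhoMinus (f k₀) y = 0 → rhoMinus y (f k₀) = 0)) := by
  have hne : Nonempty K := by
    by_contra h
    rw [not_nonempty_iff] at h
    have hf0 : f = 0 := by ext k; exact (h.false k).elim
    rw [hf0, norm_zero] at hf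
    exact zero_ne_one hf
  have hle : ∀ k, ‖f k‖ ≤ 1 := fun k => hf ▸ f.norm_coe_le_norm k
  constructor
  · -- forward direction
    intro hls
    obtain ⟨k₀, hk₀⟩ := exists_norm_eq f
    rw [hf] at hk₀
    -- f vanishes away from k₀
    have step2 : ∀ k : K, k ≠ k₀ → f k = 0 := by
      intro k₁ hk₁ne
      by_contra hfk₁
      have hr0 : (0:ℝ) < ‖f k₁‖ := norm_pos_iff.mpr hfk₁
      obtain ⟨φ, hφ0, hφ1, hφmem⟩ := exists_continuous_zero_one_of_isClosed
        (isClosed_singleton (x := k₀)) (isClosed_singleton (x := k₁))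
        (by rw [disjoint_singleton]; exact hk₁ne.symm)
      have hφk₀ : φ k₀ = 0 := hφ0 rfl
      have hφk₁ : φ k₁ = 1 := hφ1 rfl
      set g : C(K, X) := ⟨fun k => φ k • f k, φ.continuous.smul f.continuous⟩ with hgdef
      have hgapp : ∀ k, g k = φ k • f k := fun k => rfl
      have hgub : ∀ k, ‖g k‖ = φ k * ‖f k‖ := by
        intro k
        rw [hgapp, norm_smul, Real.norm_eq_abs, abs_of_nonneg (hφmem k).1]
      set A := ‖g‖ with hA
      have hAub : ∀ k, φ k * ‖f k‖ ≤ A := fun k => (hgub k) ▸ g.norm_coe_le_norm k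
      have hA0 : 0 < A := by
        have := hAub k₁
        calc (0:ℝ) < ‖f k₁‖ := hr0
        _ = φ k₁ * ‖f k₁‖ := by rw [hφk₁, one_mul]
        _ ≤ A := hAub k₁
      have hA1 : A ≤ 1 := by
        rw [hA]
        refine (g.norm_le zero_le_one).2 fun k => ?_
        rw [hgub k]
        calc φ k * ‖f k‖ ≤ 1 * 1 :=
          mul_le_mul (hφmem k).2 (hle k) (norm_nonneg _) zero_le_one
        _ = 1 := one_mul 1
      -- rhoMinus f g = 0
      have hfg : rhoMinus f g = 0 := by
        apply rhoMinus_eq_zero_of_eventually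
        filter_upwards [Ioo_mem_nhdsLT_of_mem
          (⟨by norm_num, le_refl (0:ℝ)⟩ : (0:ℝ) ∈ Ioc (-1 : ℝ) 0)] with t ht
        obtain ⟨ht1, ht2⟩ := ht
        rw [hf]
        apply norm_eq_of (k := k₀)
        · intro k
          have happ : (f + t • g) k = (1 + t * φ k) • f k := by
            simp only [ContinuousMap.add_apply, ContinuousMap.smul_apply, hgapp,
              smul_smul, add_smul, one_smul]
          rw [happ, norm_smul, Real.norm_eq_abs]
          have h1 : 0 ≤ 1 + t * φ k := by nlinarith [(hφmem k).1, (hφmem k).2]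
          have h2 : 1 + t * φ k ≤ 1 := by nlinarith [(hφmem k).1]
          rw [abs_of_nonneg h1]
          calc (1 + t * φ k) * ‖f k‖ ≤ 1 * 1 :=
            mul_le_mul h2 (hle k) (norm_nonneg _) zero_le_one
          _ = 1 := one_mul 1
        · have happ : (f + t • g) k₀ = (1 + t * φ k₀) • f k₀ := by
            simp only [ContinuousMap.add_apply, ContinuousMap.smul_apply, hgapp,
              smul_smul, add_smul, one_smul]
          rw [happ, hφk₀]
          simp [hk₀]
      have hgf : rhoMinus g f = 0 := hls g hfg
      -- contradiction : rhoMinus g f ≥ A^2/2 > 0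
      set t₀ : ℝ := -(A/(2*(2+A))) with ht₀
      have ht₀neg : t₀ < 0 := by
        have h : 0 < A/(2*(2+A)) := by positivity
        rw [ht₀]; linarith
      have hta : -(A/4) ≤ t₀ := by
        have h : A/(2*(2+A)) ≤ A/4 :=
          div_le_div_of_nonneg_left hA0.le (by norm_num) (by linarith)
        rw [ht₀]; linarith
      have htc : -t₀ * (2+A) = A/2 := by
        rw [ht₀, neg_neg]
        field_simp
      have hmain : ∀ k, ‖(g + t₀ • f) k‖ ≤ A + t₀ * (A/2) := by
        intro k
        have happ : (g + t₀ • f) k = (φ k + t₀) • f k := by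
          simp only [ContinuousMap.add_apply, ContinuousMap.smul_apply, hgapp, add_smul]
        rw [happ, norm_smul, Real.norm_eq_abs,
          ← abs_of_nonneg (norm_nonneg (f k)), ← abs_mul]
        have h1 := (hφmem k).1
        have h2 := (hφmem k).2
        have h3 := hle k
        have h4 := norm_nonneg (f k)
        have h5 := hAub k
        rw [abs_le]
        constructor
        · nlinarith [mul_nonneg h1 h4, mul_nonneg (neg_nonneg.mpr ht₀neg.le) h4]
        · rcases le_or_gt (A/2) ‖f k‖ with hbig | hsmall
          · have h6 : (0:ℝ) ≤ (-t₀) * (‖f k‖ - A/2) :=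
              mul_nonneg (neg_nonneg.mpr ht₀neg.le) (by linarith)
            nlinarith
          · have h6 : φ k * ‖f k‖ ≤ ‖f k‖ := by nlinarith
            have h7 : (0:ℝ) ≤ (-t₀) * ‖f k‖ :=
              mul_nonneg (neg_nonneg.mpr ht₀neg.le) h4
            nlinarith
      have hnorm_le : ‖g + t₀ • f‖ ≤ A + t₀ * (A/2) := by
        refine ((g + t₀ • f).norm_le ?_).2 hmain
        nlinarith
      have hqf : A/2 ≤ qf g f t₀ := by
        have hq : qf g f t₀ = (‖g + t₀ • f‖ - ‖g‖) / t₀ := rfl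
        rw [hq, le_div_iff_of_neg ht₀neg]
        linarith
      have hLm : A/2 ≤ Lm g f := le_trans hqf (qf_le_Lm g f ht₀neg)
      rw [rhoMinus_eq] at hgf
      rw [← hA] at hgf
      nlinarith
    refine ⟨k₀, hk₀, step2, ?_⟩
    intro y hy
    have hopen := isolated hk₀ step2
    obtain ⟨g, hgk₀, hg0⟩ := exists_point_mass hopen y
    have hev1 : ∀ t : ℝ, ‖f + t • g‖ = ‖f k₀ + t • y‖ := by
      intro t
      apply norm_eq_of (k := k₀)
      · intro k
        rcases eq_or_ne k k₀ with rfl | hk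
        · rw [ContinuousMap.add_apply, ContinuousMap.smul_apply, hgk₀]
        · rw [ContinuousMap.add_apply, ContinuousMap.smul_apply, hg0 k hk,
            step2 k hk, smul_zero, add_zero, norm_zero]
          exact norm_nonneg _
      · rw [ContinuousMap.add_apply, ContinuousMap.smul_apply, hgk₀]
    have hev2 : ∀ t : ℝ, ‖g + t • f‖ = ‖y + t • (f k₀)‖ := by
      intro t
      apply norm_eq_of (k := k₀)
      · intro k
        rcases eq_or_ne k k₀ with rfl | hk
        · rw [ContinuousMap.add_apply, ContinuousMap.smul_apply, hgk₀]
        · rw [ContinuousMap.add_apply, ContinuousMap.smul_apply, hg0 k hk,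
            step2 k hk, smul_zero, add_zero, norm_zero]
          exact norm_nonneg _
      · rw [ContinuousMap.add_apply, ContinuousMap.smul_apply, hgk₀]
    have e1 : rhoMinus f g = rhoMinus (f k₀) y :=
      rhoMinus_congr₂ (by rw [hf, hk₀]) (Eventually.of_forall hev1)
    have hn2 : ‖g‖ = ‖y‖ := by simpa using hev2 0
    have e2 : rhoMinus g f = rhoMinus y (f k₀) :=
      rhoMinus_congr₂ hn2 (Eventually.of_forall hev2)
    rw [← e2]
    exact hls g (by rw [e1]; exact hy)
  · rintro ⟨k₀, hk1, hzero, hsym⟩ g hfg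
    have hopen := isolated hk1 hzero
    set δ : ℝ := 1/(2*(‖g‖+1)) with hδ
    have hδ0 : 0 < δ := by rw [hδ]; positivity
    have hev1 : ∀ t ∈ Ioo (-δ) (0:ℝ), ‖f + t • g‖ = ‖f k₀ + t • g k₀‖ := by
      rintro t ⟨ht1, ht2⟩
      have htabs : |t| < δ := abs_lt.mpr ⟨ht1, by linarith⟩
      have h3 : |t| * ‖g‖ < 1/2 := by
        calc |t| * ‖g‖ ≤ |t| * (‖g‖+1) := by nlinarith [abs_nonneg t]
        _ < δ * (‖g‖+1) := by nlinarith [norm_nonneg g]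
        _ = 1/2 := by rw [hδ]; field_simp
      have h2 : 1 - |t| * ‖g‖ ≤ ‖f k₀ + t • g k₀‖ := by
        have ha := norm_add_le (f k₀ + t • g k₀) (-(t • g k₀))
        simp only [add_neg_cancel_right, norm_neg] at ha
        rw [hk1] at ha
        have hb : ‖t • g k₀‖ ≤ |t| * ‖g‖ := by
          rw [norm_smul, Real.norm_eq_abs]
          exact mul_le_mul_of_nonneg_left (g.norm_coe_le_norm k₀) (abs_nonneg t)
        linarith
      apply norm_eq_of (k := k₀)
      · intro k
        rcases eq_or_ne k k₀ with rfl | hk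
        · rw [ContinuousMap.add_apply, ContinuousMap.smul_apply]
        · rw [ContinuousMap.add_apply, ContinuousMap.smul_apply, hzero k hk, zero_add]
          have h1 : ‖t • g k‖ ≤ |t| * ‖g‖ := by
            rw [norm_smul, Real.norm_eq_abs]
            exact mul_le_mul_of_nonneg_left (g.norm_coe_le_norm k) (abs_nonneg t)
          linarith
      · rw [ContinuousMap.add_apply, ContinuousMap.smul_apply]
    have e1 : rhoMinus f g = rhoMinus (f k₀) (g k₀) := by
      apply rhoMinus_congr₂ (by rw [hf, hk1])
      filter_upwards [Ioo_mem_nhdsLT_of_mem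
        (⟨neg_neg_of_pos hδ0, le_refl (0:ℝ)⟩ : (0:ℝ) ∈ Ioc (-δ) 0)] with t ht
      exact hev1 t ht
    have hyx : rhoMinus (g k₀) (f k₀) = 0 := hsym _ (by rw [← e1]; exact hfg)
    obtain ⟨g', hg'0, hg'⟩ := exists_zero_at hopen g
    have key : ∀ t : ℝ, ‖g + t • f‖ = max ‖g k₀ + t • f k₀‖ ‖g'‖ := by
      intro t
      apply le_antisymm
      · refine (ContinuousMap.norm_le _ (le_max_of_le_left (norm_nonneg _))).2 fun k => ?_
        rcases eq_or_ne k k₀ with rfl | hk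
        · rw [ContinuousMap.add_apply, ContinuousMap.smul_apply]
          exact le_max_left _ _
        · rw [ContinuousMap.add_apply, ContinuousMap.smul_apply, hzero k hk,
            smul_zero, add_zero, ← hg' k hk]
          exact le_max_of_le_right (g'.norm_coe_le_norm k)
      · apply max_le
        · have he : ‖g k₀ + t • f k₀‖ = ‖(g + t • f) k₀‖ := by
            rw [ContinuousMap.add_apply, ContinuousMap.smul_apply]
          rw [he]
          exact (g + t • f).norm_coe_le_norm k₀
        · refine (g'.norm_le (norm_nonneg _)).2 fun k => ?_
          rcases eq_or_ne k k₀ with rfl | hk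
          · rw [hg'0, norm_zero]
            exact norm_nonneg _
          · rw [hg' k hk]
            have he : ‖g k‖ = ‖(g + t • f) k‖ := by
              rw [ContinuousMap.add_apply, ContinuousMap.smul_apply, hzero k hk,
                smul_zero, add_zero]
            rw [he]
            exact (g + t • f).norm_coe_le_norm k
    have hgnorm : ‖g‖ = max ‖g k₀‖ ‖g'‖ := by simpa using key 0
    rcases eq_or_ne ‖g‖ 0 with hg0 | hg0
    · rw [rhoMinus_eq, hg0, zero_mul]
    rcases le_or_gt ‖g'‖ ‖g k₀‖ with hNy | hNy
    · have hyn : ‖g‖ = ‖g k₀‖ := by rw [hgnorm, max_eq_left hNy]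
      have hy0 : ‖g k₀‖ ≠ 0 := fun h => hg0 (hyn.trans h)
      have hLm : Lm (g k₀) (f k₀) = 0 := by
        rw [rhoMinus_eq] at hyx
        exact (mul_eq_zero.mp hyx).resolve_left hy0
      refine Eq.trans (rhoMinus_congr₂ hyn ?_) hyx
      filter_upwards [self_mem_nhdsWithin] with t ht
      have ht' : t < 0 := ht
      rw [key t, max_eq_left]
      have h1 : qf (g k₀) (f k₀) t ≤ 0 := hLm ▸ qf_le_Lm _ _ ht'
      rw [qf, div_nonpos_iff] at h1
      rcases h1 with ⟨h2, h3⟩ | ⟨h2, h3⟩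
      · linarith
      · linarith
    · apply rhoMinus_eq_zero_of_eventually
      have hd : ‖g k₀‖ - ‖g'‖ < 0 := by linarith
      filter_upwards [Ioo_mem_nhdsLT_of_mem
        (⟨hd, le_refl (0:ℝ)⟩ : (0:ℝ) ∈ Ioc (‖g k₀‖ - ‖g'‖) 0)] with t ht
      obtain ⟨ht1, ht2⟩ := ht
      rw [key t, max_eq_right, hgnorm, max_eq_right hNy.le]
      have ha : ‖g k₀ + t • f k₀‖ ≤ ‖g k₀‖ + ‖t • f k₀‖ := norm_add_le _ _
      have hb : ‖t • f k₀‖ = |t| := by rw [norm_smul, Real.norm_eq_abs, hk1, mul_one]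
      have hc : |t| < ‖g'‖ - ‖g k₀‖ := abs_lt.mpr ⟨by linarith, by linarith⟩
      linarith
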